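/- Let n, m be natural numbers, β a nonzero real number, K an invertible real n×n matrix, M a real n×n matrix, M_Γ an invertible real m×m matrix, and N a real n×m matrix. Set A = [[K, −N], [0, β·M_Γ]] (an (n+m)×(n+m) block matrix), B the (n+m)×n block column [[0], [−Nᵀ]], C the n×(n+m) block row [M, 0], and D = K. Then A is invertible and the Schur complement D − C A⁻¹ B equals K + (1/β)·M K⁻¹ N M_Γ⁻¹ Nᵀ. -/

import Mathlib

open Matrix

/-- For the permuted saddle point system with blocks
`A = [[K, −N], [0, β·M_Γ]]`, `B = [[0], [−Nᵀ]]`, `C = [M, 0]`, `D = K`,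
the block `A` is invertible and the Schur complement `D − C A⁻¹ B` equals
`K + (1/β)·M K⁻¹ N M_Γ⁻¹ Nᵀ`. -/
theorem schur_complement_permuted_saddle
    (n m : ℕ) (β : ℝ) (hβ : β ≠ 0)
    (K : Matrix (Fin n) (Fin n) ℝ) (hK : IsUnit K.det)
    (M : Matrix (Fin n) (Fin n) ℝ)
    (MΓ : Matrix (Fin m) (Fin m) ℝ) (hMΓ : IsUnit MΓ.det)
    (N : Matrix (Fin n) (Fin m) ℝ) :
    IsUnit (Matrix.fromBlocks K (-N) 0 (β • MΓ)).det ∧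
    K - Matrix.fromCols M (0 : Matrix (Fin n) (Fin m) ℝ) * (Matrix.fromBlocks K (-N) 0 (β • MΓ))⁻¹ *
        Matrix.fromRows (0 : Matrix (Fin n) (Fin n) ℝ) (-Nᵀ) =
      K + (1 / β) • (M * K⁻¹ * N * MΓ⁻¹ * Nᵀ) := by
  have hβMΓ : IsUnit (β • MΓ).det := by
    rw [Matrix.det_smul]
    exact ((isUnit_iff_ne_zero.mpr hβ).pow _).mul hMΓ
  constructor
  · rw [Matrix.det_fromBlocks_zero₂₁]
    exact hK.mul hβMΓ
  · have hiff : IsUnit K ↔ IsUnit (β • MΓ) := by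
      rw [Matrix.isUnit_iff_isUnit_det, Matrix.isUnit_iff_isUnit_det]
      exact ⟨fun _ => hβMΓ, fun _ => hK⟩
    rw [Matrix.inv_fromBlocks_zero₂₁_of_isUnit_iff K (-N) (β • MΓ) hiff,
      Matrix.fromCols_mul_fromBlocks, Matrix.fromCols_mul_fromRows]
    have hsm : (β • MΓ)⁻¹ = β⁻¹ • MΓ⁻¹ := by
      have : Invertible β := invertibleOfNonzero hβ
      simpa using Matrix.inv_smul (A := MΓ) β hMΓ
    rw [hsm]
    simp [Matrix.mul_smul, Matrix.smul_mul, Matrix.mul_assoc, sub_eq_add_neg]
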